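/- Let B be a d×d real matrix with B^T + B ≤ 0, and V = {x : ‖e^{tB}x‖ = ‖x‖ for all t ∈ R}. The restriction of B to V^⊥ is Hurwitz, i.e., every eigenvalue of B restricted to V^⊥ has strictly negative real part. -/

import Mathlib

open Matrix NormedSpace

/-- The Euclidean norm on `ℝ^d`. -/
noncomputable def eNorm {d : ℕ} (x : Fin d → ℝ) : ℝ := Real.sqrt (x ⬝ᵥ x)

section aux

attribute [local instance] Matrix.linftyOpSemiNormedRing Matrix.linftyOpNormedRing
  Matrix.linftyOpNormedAlgebra

variable {d : ℕ}

/-- mulVec with fixed vector, as a continuous linear map in the matrix. -/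
noncomputable def mulVecCLM (𝕜 : Type*) [RCLike 𝕜] (v : Fin d → 𝕜) :
    Matrix (Fin d) (Fin d) 𝕜 →L[𝕜] (Fin d → 𝕜) :=
  LinearMap.toContinuousLinearMap
    { toFun := fun A => A.mulVec v
      map_add' := fun A B => Matrix.add_mulVec A B v
      map_smul' := fun c A => Matrix.smul_mulVec c A v }

@[simp] lemma mulVecCLM_apply (𝕜 : Type*) [RCLike 𝕜] (v : Fin d → 𝕜)
    (A : Matrix (Fin d) (Fin d) 𝕜) : mulVecCLM 𝕜 v A = A.mulVec v := rfl

lemma hasDerivAt_flow (B : Matrix (Fin d) (Fin d) ℝ) (x : Fin d → ℝ) (t : ℝ) :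
    HasDerivAt (fun t : ℝ => (exp (t • B)).mulVec x)
      (B.mulVec ((exp (t • B)).mulVec x)) t := by
  have h := hasDerivAt_exp_smul_const' (𝕂 := ℝ) B t
  have := ((mulVecCLM ℝ x).hasFDerivAt.comp_hasDerivAt t h)
  rw [Matrix.mulVec_mulVec]
  exact this

lemma N_antitone (B : Matrix (Fin d) (Fin d) ℝ)
    (hB : ∀ x : Fin d → ℝ, x ⬝ᵥ ((Bᵀ + B).mulVec x) ≤ 0) (x : Fin d → ℝ) :
    Antitone (fun t : ℝ => ((exp (t • B)).mulVec x) ⬝ᵥ ((exp (t • B)).mulVec x)) := by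
  set w : ℝ → (Fin d → ℝ) := fun t => (exp (t • B)).mulVec x with hw
  have hderiv : ∀ t : ℝ, HasDerivAt (fun t => w t ⬝ᵥ w t)
      (w t ⬝ᵥ ((Bᵀ + B).mulVec (w t))) t := by
    intro t
    have hwt := hasDerivAt_flow B x
    have hcoord : ∀ i, HasDerivAt (fun t => w t i) (B.mulVec (w t) i) t :=
      fun i => hasDerivAt_pi.1 (hwt t) i
    have : HasDerivAt (fun t => ∑ i, w t i * w t i)
        (∑ i, (B.mulVec (w t) i * w t i + w t i * B.mulVec (w t) i)) t :=
      HasDerivAt.fun_sum (fun i _ => (hcoord i).mul (hcoord i))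
    have key : (∑ i, (B.mulVec (w t) i * w t i + w t i * B.mulVec (w t) i))
        = w t ⬝ᵥ ((Bᵀ + B).mulVec (w t)) := by
      rw [Matrix.add_mulVec, dotProduct_add, Matrix.mulVec_transpose,
        Finset.sum_add_distrib]
      congr 1
      · show (B *ᵥ w t) ⬝ᵥ w t = _
        rw [dotProduct_comm, Matrix.dotProduct_mulVec, dotProduct_comm]
    simpa [dotProduct, key] using this
  exact antitone_of_deriv_nonpos
    (fun t => (hderiv t).differentiableAt)
    (fun t => by rw [(hderiv t).deriv]; exact hB _)

end aux

section aux2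

attribute [local instance] Matrix.linftyOpSemiNormedRing Matrix.linftyOpNormedRing
  Matrix.linftyOpNormedAlgebra

variable {d : ℕ}

lemma exp_mulVec_eigen (Bc : Matrix (Fin d) (Fin d) ℂ) (μ : ℂ) (v : Fin d → ℂ)
    (h : Bc.mulVec v = μ • v) (t : ℝ) :
    (exp (t • Bc)).mulVec v = Complex.exp (t * μ) • v := by
  set g : ℝ → (Fin d → ℂ) := fun s => Complex.exp (-(s * μ)) • (exp (s • Bc)).mulVec v with hgdef
  have hc : ∀ s : ℝ, HasDerivAt (fun s : ℝ => Complex.exp (-(s * μ)))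
      (Complex.exp (-(s * μ)) * -μ) s := by
    intro s
    have h1 : HasDerivAt (fun z : ℂ => -(z * μ)) (-μ) (s : ℂ) := by
      simpa using ((hasDerivAt_id (s : ℂ)).mul_const μ).fun_neg
    have h2 := (Complex.hasDerivAt_exp (-(s * μ))).comp (s : ℂ) h1
    exact h2.comp_ofReal
  have hw : ∀ s : ℝ, HasDerivAt (fun s : ℝ => (exp (s • Bc)).mulVec v)
      (μ • (exp (s • Bc)).mulVec v) s := by
    intro s
    have h1 := hasDerivAt_exp_smul_const (𝕂 := ℝ) Bc s
    have h2 := ((mulVecCLM ℂ v).restrictScalars ℝ).hasFDerivAt.comp_hasDerivAt s h1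
    have h3 : (exp (s • Bc) * Bc) *ᵥ v = μ • exp (s • Bc) *ᵥ v := by
      rw [← Matrix.mulVec_mulVec, h, Matrix.mulVec_smul]
    rw [← h3]
    exact h2
  have hg : ∀ s : ℝ, HasDerivAt g 0 s := by
    intro s
    have := (hc s).smul (hw s)
    refine this.congr_deriv ?_
    rw [smul_smul, ← add_smul]
    simp [mul_neg]
  have hconst : g t = g 0 :=
    is_const_of_fderiv_eq_zero (fun s => (hg s).differentiableAt)
      (fun s => by rw [(hg s).hasFDerivAt.fderiv]; ext y; simp) t 0
  have hg0 : g 0 = v := by simp [hgdef]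
  have : Complex.exp (-(t * μ)) • (exp (t • Bc)).mulVec v = v := hconst.trans hg0
  calc (exp (t • Bc)).mulVec v
      = Complex.exp (t * μ) • (Complex.exp (-(t * μ)) • (exp (t • Bc)).mulVec v) := by
        rw [smul_smul, ← Complex.exp_add]; simp
    _ = Complex.exp (t * μ) • v := by rw [this]

lemma exp_map_ofReal (A : Matrix (Fin d) (Fin d) ℝ) :
    (exp A).map (fun r => (r : ℂ)) = exp (A.map (fun r => (r : ℂ))) := by
  have hcont : Continuous fun M : Matrix (Fin d) (Fin d) ℝ =>
      (Complex.ofRealHom.mapMatrix : Matrix (Fin d) (Fin d) ℝ →+* Matrix (Fin d) (Fin d) ℂ) M :=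
    continuous_id.matrix_map Complex.continuous_ofReal
  exact map_exp (Complex.ofRealHom.mapMatrix) hcont A

end aux2

/-- The restriction of `B` to `V^⊥` is Hurwitz: every (complex) eigenvalue of `B` whose
eigenvector lies in the complexification of `V^⊥` has strictly negative real part. -/
theorem restriction_to_orthogonal_hurwitz {d : ℕ} (B : Matrix (Fin d) (Fin d) ℝ)
    (hB : ∀ x : Fin d → ℝ, x ⬝ᵥ ((Bᵀ + B).mulVec x) ≤ 0)
    (V : Set (Fin d → ℝ))
    (hV : V = {x | ∀ t : ℝ, eNorm ((NormedSpace.exp (t • B)).mulVec x) = eNorm x})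
    (μ : ℂ) (v : Fin d → ℂ) (hv : v ≠ 0)
    (heig : (B.map (fun r => (r : ℂ))).mulVec v = μ • v)
    (hre : ∀ y ∈ V, y ⬝ᵥ (fun i => (v i).re) = 0)
    (him : ∀ y ∈ V, y ⬝ᵥ (fun i => (v i).im) = 0) :
    μ.re < 0 := by
  by_contra hμ
  push_neg at hμ
  set x : Fin d → ℝ := fun i => (v i).re with hxdef
  set y : Fin d → ℝ := fun i => (v i).im with hydef
  set Bc : Matrix (Fin d) (Fin d) ℂ := B.map (fun r => (r : ℂ)) with hBc
  have hmap : ∀ t : ℝ, (exp (t • B)).map (fun r => (r : ℂ)) = exp (t • Bc) := by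
    intro t
    rw [exp_map_ofReal]
    congr 1
    ext i j
    simp [hBc, Complex.real_smul]
  have hkey : ∀ t : ℝ, ((exp (t • B)).map (fun r => (r : ℂ))).mulVec v
      = Complex.exp (t * μ) • v := fun t => by
    rw [hmap t]; exact exp_mulVec_eigen Bc μ v heig t
  have hre_im : ∀ (t : ℝ) (i : Fin d),
      (exp (t • B)).mulVec x i = (Complex.exp (↑t * μ) * v i).re ∧
      (exp (t • B)).mulVec y i = (Complex.exp (↑t * μ) * v i).im := by
    intro t i
    have h1 := congrFun (hkey t) i
    have h1' : (∑ j, (((exp (t • B)) i j : ℝ) : ℂ) * v j) = Complex.exp (↑t * μ) * v i := h1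
    constructor
    · have := congrArg Complex.re h1'
      rw [Complex.re_sum] at this
      simpa [Matrix.mulVec, dotProduct, hxdef, hydef] using this
    · have := congrArg Complex.im h1'
      rw [Complex.im_sum] at this
      simpa [Matrix.mulVec, dotProduct, hxdef, hydef] using this
  set Nx : ℝ → ℝ := fun t => ((exp (t • B)).mulVec x) ⬝ᵥ ((exp (t • B)).mulVec x) with hNx
  set Ny : ℝ → ℝ := fun t => ((exp (t • B)).mulVec y) ⬝ᵥ ((exp (t • B)).mulVec y) with hNy
  have hNsum : ∀ t : ℝ, Nx t + Ny t = Real.exp (2 * (t * μ.re)) * (x ⬝ᵥ x + y ⬝ᵥ y) := by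
    intro t
    have hterm : ∀ i, (exp (t • B)).mulVec x i * (exp (t • B)).mulVec x i
        + (exp (t • B)).mulVec y i * (exp (t • B)).mulVec y i
        = Real.exp (2 * (t * μ.re)) * (x i * x i + y i * y i) := by
      intro i
      rw [(hre_im t i).1, (hre_im t i).2]
      have h2 : ∀ z : ℂ, z.re * z.re + z.im * z.im = Complex.normSq z := fun z => by
        simp [Complex.normSq_apply]
      rw [h2, Complex.normSq_mul]
      have h3 : Complex.normSq (Complex.exp (↑t * μ)) = Real.exp (2 * (t * μ.re)) := by
        rw [Complex.normSq_eq_norm_sq, Complex.norm_exp]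
        have : (↑t * μ).re = t * μ.re := by simp
        rw [this, sq, ← Real.exp_add]
        ring_nf
      rw [h3]
      have h4 : Complex.normSq (v i) = x i * x i + y i * y i := by
        simp [Complex.normSq_apply, hxdef, hydef]
      rw [h4]
    simp only [hNx, hNy, dotProduct]
    rw [← Finset.sum_add_distrib, ← Finset.sum_add_distrib, Finset.mul_sum]
    exact Finset.sum_congr rfl fun i _ => hterm i
  have hAx := N_antitone B hB x
  have hAy := N_antitone B hB y
  have hNx0 : Nx 0 = x ⬝ᵥ x := by simp [hNx]
  have hNy0 : Ny 0 = y ⬝ᵥ y := by simp [hNy]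
  have hxx_nonneg : (0:ℝ) ≤ x ⬝ᵥ x := Finset.sum_nonneg fun i _ => mul_self_nonneg _
  have hyy_nonneg : (0:ℝ) ≤ y ⬝ᵥ y := Finset.sum_nonneg fun i _ => mul_self_nonneg _
  have hcpos : 0 < x ⬝ᵥ x + y ⬝ᵥ y := by
    rcases eq_or_lt_of_le (add_nonneg hxx_nonneg hyy_nonneg) with h0 | h
    · exfalso
      have hx0 : x ⬝ᵥ x = 0 := by linarith
      have hy0 : y ⬝ᵥ y = 0 := by linarith
      apply hv
      funext i
      have hx := congrFun (dotProduct_self_eq_zero.mp hx0) i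
      have hy := congrFun (dotProduct_self_eq_zero.mp hy0) i
      exact Complex.ext hx hy
    · exact h
  have hre0 : μ.re = 0 := by
    by_contra h0
    have hpos : 0 < μ.re := lt_of_le_of_ne hμ (Ne.symm h0)
    have h1 : Nx 1 + Ny 1 ≤ Nx 0 + Ny 0 := add_le_add (hAx zero_le_one) (hAy zero_le_one)
    rw [hNsum 1, hNsum 0] at h1
    simp only [mul_zero, zero_mul, mul_one, one_mul, Real.exp_zero] at h1
    have he : 1 < Real.exp (2 * μ.re) := Real.one_lt_exp_iff.mpr (by linarith)
    nlinarith [he, hcpos, h1]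
  have hsum_const : ∀ t : ℝ, Nx t + Ny t = Nx 0 + Ny 0 := by
    intro t
    rw [hNsum t, hNx0, hNy0, hre0]
    simp
  have hconst : ∀ t : ℝ, Nx t = Nx 0 ∧ Ny t = Ny 0 := by
    intro t
    rcases le_total 0 t with ht | ht
    · have h1 := hAx ht
      have h2 := hAy ht
      have h3 := hsum_const t
      exact ⟨by linarith, by linarith⟩
    · have h1 := hAx ht
      have h2 := hAy ht
      have h3 := hsum_const t
      exact ⟨by linarith, by linarith⟩
  have hxV : x ∈ V := by
    rw [hV]
    intro t
    show Real.sqrt _ = Real.sqrt _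
    rw [show ((exp (t • B)).mulVec x) ⬝ᵥ ((exp (t • B)).mulVec x) = Nx t from rfl,
      (hconst t).1, hNx0]
  have hyV : y ∈ V := by
    rw [hV]
    intro t
    show Real.sqrt _ = Real.sqrt _
    rw [show ((exp (t • B)).mulVec y) ⬝ᵥ ((exp (t • B)).mulVec y) = Ny t from rfl,
      (hconst t).2, hNy0]
  have hx0 : x ⬝ᵥ x = 0 := hre x hxV
  have hy0 : y ⬝ᵥ y = 0 := him y hyV
  rw [hx0, hy0] at hcpos
  simp at hcpos
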